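/- Let (X,f) be a zero-dimensional system (X a nonempty compact metrizable totally disconnected space, f a homeomorphism) that is densely aperiodic. Then there exists a minimal basic set B with empty interior (continuously decisive) such that |M ∩ B| = 1 for every minimal set M. -/

import Mathlib

open Set

/-- The full orbit `{fⁿ(x) : n ∈ ℤ}` of a point under a homeomorphism. -/
def orbitZ {X : Type*} [TopologicalSpace X] (f : X ≃ₜ X) (x : X) : Set X :=
  {y | ∃ n : ℤ, (f.toEquiv ^ n) x = y}

/-- `O(A) = ⋃_{n ∈ ℤ} fⁿ(A)`. -/
def orbitSetZ {X : Type*} [TopologicalSpace X] (f : X ≃ₜ X) (A : Set X) : Set X :=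
  ⋃ n : ℤ, (f.toEquiv ^ n) '' A

/-- `O⁺(A) = ⋃_{n ≥ 0} fⁿ(A)`. -/
def orbitSetP {X : Type*} [TopologicalSpace X] (f : X ≃ₜ X) (A : Set X) : Set X :=
  ⋃ n : ℕ, (f.toEquiv ^ (n : ℤ)) '' A

/-- `O⁻(A) = ⋃_{n ≤ 0} fⁿ(A)`. -/
def orbitSetN {X : Type*} [TopologicalSpace X] (f : X ≃ₜ X) (A : Set X) : Set X :=
  ⋃ n : ℕ, (f.toEquiv ^ (-(n : ℤ))) '' A

/-- The ω-limit set of a point. -/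
def omegaSet {X : Type*} [TopologicalSpace X] (f : X ≃ₜ X) (x : X) : Set X :=
  ⋂ n : ℕ, closure {y | ∃ m : ℕ, n ≤ m ∧ (f.toEquiv ^ (m : ℤ)) x = y}

/-- The α-limit set of a point. -/
def alphaSet {X : Type*} [TopologicalSpace X] (f : X ≃ₜ X) (x : X) : Set X :=
  ⋂ n : ℕ, closure {y | ∃ m : ℕ, n ≤ m ∧ (f.toEquiv ^ (-(m : ℤ))) x = y}

/-- A minimal set: nonempty, closed, invariant, and every orbit in it is dense in it. -/
def IsMinimalSet {X : Type*} [TopologicalSpace X] (f : X ≃ₜ X) (M : Set X) : Prop :=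
  M.Nonempty ∧ IsClosed M ∧ f '' M = M ∧ ∀ x ∈ M, M ⊆ closure (orbitZ f x)

/-- `M_f`: the closure of the union of all minimal sets. -/
def minimalUnion {X : Type*} [TopologicalSpace X] (f : X ≃ₜ X) : Set X :=
  closure (⋃₀ {M | IsMinimalSet f M})

/-- A wandering point. -/
def IsWandering {X : Type*} [TopologicalSpace X] (f : X ≃ₜ X) (x : X) : Prop :=
  ∃ U : Set X, IsOpen U ∧ x ∈ U ∧ ∀ n : ℤ, n ≠ 0 → (f.toEquiv ^ n) '' U ∩ U = ∅

/-- `Ω_f`: the set of non-wandering points. -/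
def nonWandering {X : Type*} [TopologicalSpace X] (f : X ≃ₜ X) : Set X :=
  {x | ¬ IsWandering f x}

/-- A quasi-section: a closed set every open neighborhood of which has full orbit. -/
def IsQuasiSection {X : Type*} [TopologicalSpace X] (f : X ≃ₜ X) (A : Set X) : Prop :=
  IsClosed A ∧ ∀ U : Set X, IsOpen U → A ⊆ U → orbitSetZ f U = Set.univ

/-- A minimal quasi-section (minimal w.r.t. inclusion among quasi-sections). -/
def IsMinimalQuasiSection {X : Type*} [TopologicalSpace X] (f : X ≃ₜ X) (A : Set X) : Prop :=
  IsQuasiSection f A ∧ ∀ B : Set X, IsQuasiSection f B → B ⊆ A → B = A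

/-- A basic set: a quasi-section meeting every orbit in at most one point. -/
def IsBasicSet {X : Type*} [TopologicalSpace X] (f : X ≃ₜ X) (A : Set X) : Prop :=
  IsQuasiSection f A ∧ ∀ x : X, (orbitZ f x ∩ A).Subsingleton

/-- A minimal basic set (minimal w.r.t. inclusion among basic sets). -/
def IsMinimalBasicSet {X : Type*} [TopologicalSpace X] (f : X ≃ₜ X) (A : Set X) : Prop :=
  IsBasicSet f A ∧ ∀ B : Set X, IsBasicSet f B → B ⊆ A → B = A

/-- Densely aperiodic: the points with infinite orbit are dense. -/
def DenselyAperiodic {X : Type*} [TopologicalSpace X] (f : X ≃ₜ X) : Prop :=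
  Dense {x : X | (orbitZ f x).Infinite}

namespace Stmt19Aux
variable {X : Type*} [TopologicalSpace X] (f : X ≃ₜ X)

lemma fz_add (a b : ℤ) (x : X) :
    (f.toEquiv ^ (a + b)) x = (f.toEquiv ^ a) ((f.toEquiv ^ b) x) := by
  rw [zpow_add]; rfl

lemma fz_one (x : X) : (f.toEquiv ^ (1 : ℤ)) x = f x := by
  rw [zpow_one]; rfl

lemma fz_neg_one (x : X) : (f.toEquiv ^ (-1 : ℤ)) x = f.symm x := by
  rw [zpow_neg, zpow_one, Equiv.Perm.inv_def]; rfl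

lemma fz_zero (x : X) : (f.toEquiv ^ (0 : ℤ)) x = x := by
  rw [zpow_zero]; rfl

lemma contZ : ∀ n : ℤ, Continuous fun x => (f.toEquiv ^ n) x := by
  intro n
  induction n using Int.induction_on with
  | zero => simpa [fz_zero] using continuous_id'
  | succ n ih =>
      have h : (fun x : X => (f.toEquiv ^ ((n : ℤ) + 1)) x)
          = fun x => (f.toEquiv ^ (n : ℤ)) (f x) := funext fun x => by rw [fz_add, fz_one]
      rw [h]; exact ih.comp f.continuous
  | pred n ih =>
      have h : (fun x : X => (f.toEquiv ^ (-(n : ℤ) - 1)) x)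
          = fun x => (f.toEquiv ^ (-(n : ℤ))) (f.symm x) := funext fun x => by
        rw [sub_eq_add_neg, fz_add, fz_neg_one]
      rw [h]; exact ih.comp f.symm.continuous

/-- The homeomorphism `f^n`. -/
noncomputable def homeoZ (n : ℤ) : X ≃ₜ X where
  toEquiv := f.toEquiv ^ n
  continuous_toFun := contZ f n
  continuous_invFun := by
    have h : ((f.toEquiv ^ n).symm : X → X) = fun x => (f.toEquiv ^ (-n)) x := by
      rw [← Equiv.Perm.inv_def, ← zpow_neg]
    show Continuous ((f.toEquiv ^ n).symm : X → X)
    rw [h]; exact contZ f (-n)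

lemma homeoZ_apply (n : ℤ) (x : X) : homeoZ f n x = (f.toEquiv ^ n) x := rfl

lemma mem_orbitZ_self (x : X) : x ∈ orbitZ f x := ⟨0, fz_zero f x⟩

lemma zpow_mem_orbitZ (n : ℤ) (x : X) : (f.toEquiv ^ n) x ∈ orbitZ f x := ⟨n, rfl⟩

lemma orbitZ_eq_of_mem {x z : X} (h : z ∈ orbitZ f x) : orbitZ f z = orbitZ f x := by
  obtain ⟨k, hk⟩ := h
  ext w
  constructor
  · rintro ⟨n, hn⟩
    exact ⟨n + k, by rw [fz_add, hk, hn]⟩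
  · rintro ⟨n, hn⟩
    refine ⟨n - k, ?_⟩
    have : (f.toEquiv ^ (n - k + k)) x = (f.toEquiv ^ (n - k)) ((f.toEquiv ^ k) x) := fz_add f _ _ x
    rw [sub_add_cancel] at this
    rw [hk] at this
    rw [← this, hn]

lemma mem_orbitZ_comm {x z : X} (h : z ∈ orbitZ f x) : x ∈ orbitZ f z := by
  rw [orbitZ_eq_of_mem f h]; exact mem_orbitZ_self f x

/-- Invariance of a set, in membership form. -/
def InvSet (L : Set X) : Prop := ∀ x : X, f x ∈ L ↔ x ∈ L

lemma invSet_of_image {L : Set X} (h : f '' L = L) : InvSet f L := by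
  intro x
  constructor
  · intro hx
    rw [← h] at hx
    obtain ⟨y, hy, hyx⟩ := hx
    rwa [← f.injective hyx]
  · intro hx
    rw [← h]; exact ⟨x, hx, rfl⟩

lemma image_of_invSet {L : Set X} (h : InvSet f L) : f '' L = L := by
  apply Subset.antisymm
  · rintro _ ⟨y, hy, rfl⟩; exact (h y).mpr hy
  · intro x hx
    refine ⟨f.symm x, ?_, f.apply_symm_apply x⟩
    have := (h (f.symm x))
    rw [f.apply_symm_apply] at this
    exact this.mp hx

lemma invSet_zpow {L : Set X} (h : InvSet f L) :
    ∀ (n : ℤ) (x : X), (f.toEquiv ^ n) x ∈ L ↔ x ∈ L := by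
  intro n
  induction n using Int.induction_on with
  | zero => intro x; rw [fz_zero]
  | succ n ih =>
      intro x
      rw [fz_add f n 1, fz_one]
      rw [ih (f x), h x]
  | pred n ih =>
      intro x
      rw [sub_eq_add_neg, fz_add, fz_neg_one]
      rw [ih (f.symm x)]
      have := h (f.symm x)
      rw [f.apply_symm_apply] at this
      exact this.symm

lemma orbitZ_subset_of_invSet {L : Set X} (h : InvSet f L) {x : X} (hx : x ∈ L) :
    orbitZ f x ⊆ L := by
  rintro _ ⟨n, rfl⟩
  exact (invSet_zpow f h n x).mpr hx

lemma invSet_closure {L : Set X} (h : InvSet f L) : InvSet f (closure L) := by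
  apply invSet_of_image
  rw [show (⇑f : X → X) = ⇑(f : X ≃ₜ X) from rfl, f.image_closure, image_of_invSet f h]

lemma invSet_orbitZ (x : X) : InvSet f (orbitZ f x) := by
  intro y
  constructor
  · rintro ⟨n, hn⟩
    refine ⟨n - 1, ?_⟩
    have h2 : (f.toEquiv ^ (n - 1 + 1)) x = (f.toEquiv ^ (n - 1)) ((f.toEquiv ^ (1:ℤ)) x) :=
      fz_add f _ _ x
    have h3 : f.symm (f y) = y := f.symm_apply_apply y
    calc (f.toEquiv ^ (n - 1)) x
        = f.symm ((f.toEquiv ^ (1:ℤ)) ((f.toEquiv ^ (n-1)) x)) := by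
          rw [fz_one, f.symm_apply_apply]
      _ = f.symm ((f.toEquiv ^ (1 + (n-1))) x) := by rw [fz_add]
      _ = f.symm ((f.toEquiv ^ n) x) := by norm_num
      _ = y := by rw [hn, h3]
  · rintro ⟨n, hn⟩
    refine ⟨1 + n, ?_⟩
    rw [fz_add, hn, fz_one]

lemma invSet_inter {A B : Set X} (hA : InvSet f A) (hB : InvSet f B) : InvSet f (A ∩ B) := by
  intro x; simp [mem_inter_iff, hA x, hB x]

end Stmt19Aux

namespace Stmt19Aux
variable {X : Type*} [TopologicalSpace X] (f : X ≃ₜ X)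

lemma exists_minimal_subset [CompactSpace X] {C : Set X} (hC : IsClosed C)
    (hne : C.Nonempty) (hinv : InvSet f C) : ∃ M, IsMinimalSet f M ∧ M ⊆ C := by
  set S : Set (Set X) := {A | A ⊆ C ∧ A.Nonempty ∧ IsClosed A ∧ InvSet f A} with hS
  have hzorn := zorn_superset_nonempty S ?_ C ⟨Subset.rfl, hne, hC, hinv⟩
  · obtain ⟨m, hmC, hmS, hmin⟩ := hzorn
    obtain ⟨hm1, hm2, hm3, hm4⟩ := hmS
    refine ⟨m, ⟨hm2, hm3, image_of_invSet f hm4, ?_⟩, hm1⟩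
    intro x hx
    have hD : closure (orbitZ f x) ∈ S := by
      refine ⟨?_, ⟨x, subset_closure (mem_orbitZ_self f x)⟩, isClosed_closure,
        invSet_closure f (invSet_orbitZ f x)⟩
      · exact (closure_minimal (orbitZ_subset_of_invSet f hm4 hx) hm3).trans hm1
    have hDm : closure (orbitZ f x) ⊆ m := closure_minimal (orbitZ_subset_of_invSet f hm4 hx) hm3
    exact hmin hD hDm
  · intro c hcS hchain hcne
    refine ⟨⋂₀ c, ?_, fun s hs => sInter_subset_of_mem hs⟩
    obtain ⟨s₀, hs₀⟩ := hcne
    have hnonempty : (⋂₀ c).Nonempty := by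
      haveI : Nonempty c := ⟨⟨s₀, hs₀⟩⟩
      apply IsCompact.nonempty_sInter_of_directed_nonempty_isCompact_isClosed
      · intro a ha b hb
        rcases hchain.total ha hb with h | h
        · exact ⟨a, ha, Subset.rfl, h⟩
        · exact ⟨b, hb, h, Subset.rfl⟩
      · exact fun U hU => (hcS hU).2.1
      · exact fun U hU => (hcS hU).2.2.1.isCompact
      · exact fun U hU => (hcS hU).2.2.1
    refine ⟨(sInter_subset_of_mem hs₀).trans (hcS hs₀).1, hnonempty,
      isClosed_sInter fun s hs => (hcS hs).2.2.1, ?_⟩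
    intro x
    simp only [mem_sInter]
    exact ⟨fun h s hs => ((hcS hs).2.2.2 x).mp (h s hs),
           fun h s hs => ((hcS hs).2.2.2 x).mpr (h s hs)⟩

end Stmt19Aux

namespace Stmt19Aux
variable {X : Type*} [TopologicalSpace X] (f : X ≃ₜ X)

lemma minimalSet_invSet {M : Set X} (hM : IsMinimalSet f M) : InvSet f M :=
  invSet_of_image f hM.2.2.1

lemma minimalSet_eq_closure_orbit {M : Set X} (hM : IsMinimalSet f M) {x : X} (hx : x ∈ M) :
    M = closure (orbitZ f x) := by
  apply Subset.antisymm (hM.2.2.2 x hx)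
  exact closure_minimal (orbitZ_subset_of_invSet f (minimalSet_invSet f hM) hx) hM.2.1

lemma zpow_neg_apply (n : ℤ) (x : X) : (f.toEquiv ^ (-n)) ((f.toEquiv ^ n) x) = x := by
  rw [← fz_add]; simp [fz_zero]

lemma quasi_meets_minimal {A M : Set X} (hA : IsQuasiSection f A) (hM : IsMinimalSet f M) :
    (M ∩ A).Nonempty := by
  by_contra h
  rw [not_nonempty_iff_eq_empty] at h
  have hsub : A ⊆ Mᶜ := by
    intro a ha haM
    have : a ∈ M ∩ A := ⟨haM, ha⟩
    rw [h] at this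
    exact this
  have hall := hA.2 Mᶜ hM.2.1.isOpen_compl hsub
  obtain ⟨y, hy⟩ := hM.1
  have hyU : y ∈ orbitSetZ f Mᶜ := by rw [hall]; trivial
  simp only [orbitSetZ, mem_iUnion] at hyU
  obtain ⟨n, z, hz, hzy⟩ := hyU
  apply hz
  have hzeq : z = (f.toEquiv ^ (-n)) y := by rw [← hzy, zpow_neg_apply]
  rw [hzeq]
  exact (invSet_zpow f (minimalSet_invSet f hM) (-n) y).mpr hy

lemma orbit_finite_of_periodic {x : X} {n : ℤ} (hn : n ≠ 0) (hfix : (f.toEquiv ^ n) x = x) :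
    (orbitZ f x).Finite := by
  have key : ∀ m : ℤ, 0 < m → (f.toEquiv ^ m) x = x → (orbitZ f x).Finite := by
    intro m hm hfm
    have hsub : orbitZ f x ⊆ (fun r : ℤ => (f.toEquiv ^ r) x) '' (Ico (0:ℤ) m) := by
      rintro _ ⟨k, rfl⟩
      refine ⟨k % m, mem_Ico.mpr ⟨Int.emod_nonneg k (by omega), Int.emod_lt_of_pos k hm⟩, ?_⟩
      have hdiv : m * (k / m) + k % m = k := Int.mul_ediv_add_emod k m
      have hfixq : ∀ q : ℤ, (f.toEquiv ^ (m * q)) x = x := by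
        intro q
        rw [zpow_mul]
        exact Equiv.Perm.zpow_apply_eq_self_of_apply_eq_self hfm q
      calc (f.toEquiv ^ (k % m)) x
          = (f.toEquiv ^ (k % m)) ((f.toEquiv ^ (m * (k/m))) x) := by rw [hfixq]
        _ = (f.toEquiv ^ (k % m + m * (k/m))) x := (fz_add f _ _ x).symm
        _ = (f.toEquiv ^ k) x := by rw [add_comm, hdiv]
    exact ((finite_Ico _ _).image _).subset hsub
  rcases lt_or_gt_of_ne hn with h | h
  · apply key (-n) (by omega)
    have h2 := zpow_neg_apply f n x
    rw [hfix] at h2; exact h2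
  · exact key n h hfix

lemma image_zpow_of_minimal {M : Set X} (hM : IsMinimalSet f M) (k : ℤ) :
    homeoZ f k '' M = M := by
  ext w
  constructor
  · rintro ⟨v, hv, rfl⟩
    exact (invSet_zpow f (minimalSet_invSet f hM) k v).mpr hv
  · intro hw
    exact ⟨(f.toEquiv ^ (-k)) w, (invSet_zpow f (minimalSet_invSet f hM) (-k) w).mpr hw, by
      show (f.toEquiv ^ k) ((f.toEquiv ^ (-k)) w) = w
      have h := zpow_neg_apply f (-k) w
      rw [neg_neg] at h
      exact h⟩

lemma minimal_infinite_perfect [CompactSpace X] {M : Set X} (hM : IsMinimalSet f M)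
    (hInf : M.Infinite) {y : X} (hy : y ∈ M) : y ∈ closure (M \ {y}) := by
  by_contra hcl
  rw [mem_closure_iff] at hcl
  push_neg at hcl
  obtain ⟨U, hUo, hyU, hUdisj⟩ := hcl
  have hUM : U ∩ M ⊆ {y} := by
    rintro z ⟨hzU, hzM⟩
    by_contra hzy
    have : z ∈ U ∩ (M \ {y}) := ⟨hzU, hzM, hzy⟩
    rw [hUdisj] at this
    exact this
  have hUMeq : U ∩ M = {y} := Subset.antisymm hUM (by rintro z rfl; exact ⟨hyU, hy⟩)
  have hMorb : ∀ z ∈ M, ∃ k : ℤ, z = (f.toEquiv ^ k) y := by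
    intro z hz
    have hyc : y ∈ closure (orbitZ f z) := hM.2.2.2 z hz hy
    rw [mem_closure_iff] at hyc
    obtain ⟨w, hwU, k, hwk⟩ := hyc U hUo hyU
    have hwM : w ∈ M := by
      rw [← hwk]; exact (invSet_zpow f (minimalSet_invSet f hM) k z).mpr hz
    have hwy : w = y := hUM ⟨hwU, hwM⟩
    refine ⟨-k, ?_⟩
    rw [← hwy, ← hwk, zpow_neg_apply]
  classical
  set V : X → Set X := fun z => if h : ∃ W : Set X, IsOpen W ∧ W ∩ M = {z} then h.choose else univ
    with hV
  have hVspec : ∀ z ∈ M, IsOpen (V z) ∧ V z ∩ M = {z} := by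
    intro z hz
    obtain ⟨k, rfl⟩ := hMorb z hz
    have hEx : ∃ W : Set X, IsOpen W ∧ W ∩ M = {(f.toEquiv ^ k) y} := by
      refine ⟨homeoZ f k '' U, (homeoZ f k).isOpenMap U hUo, ?_⟩
      calc homeoZ f k '' U ∩ M = homeoZ f k '' U ∩ homeoZ f k '' M := by
            rw [image_zpow_of_minimal f hM]
        _ = homeoZ f k '' (U ∩ M) := (Set.image_inter (homeoZ f k).injective).symm
        _ = homeoZ f k '' {y} := by rw [hUMeq]
        _ = {(f.toEquiv ^ k) y} := by rw [image_singleton]; rfl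
    rw [hV]
    simp only [hEx, dif_pos]
    exact hEx.choose_spec
  have hnhds : ∀ z ∈ M, V z ∈ nhds z := by
    intro z hz
    refine (hVspec z hz).1.mem_nhds ?_
    have : z ∈ V z ∩ M := by rw [(hVspec z hz).2]; rfl
    exact this.1
  obtain ⟨t, htM, hcov⟩ := hM.2.1.isCompact.elim_nhds_subcover V hnhds
  have hMt : M ⊆ (t : Set X) := by
    intro w hw
    obtain ⟨z, hz, hwz⟩ := mem_iUnion₂.mp (hcov hw)
    have : w ∈ V z ∩ M := ⟨hwz, hw⟩
    rw [(hVspec z (htM z hz)).2] at this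
    rw [this]; exact hz
  exact hInf (t.finite_toSet.subset hMt)

end Stmt19Aux

namespace Stmt19Aux
open TopologicalSpace

lemma exists_embedding_real (X : Type*) [TopologicalSpace X] [CompactSpace X]
    [MetrizableSpace X] [TotallyDisconnectedSpace X] [Nonempty X] :
    ∃ φ : X → ℝ, Continuous φ ∧ Function.Injective φ := by
  classical
  letI : MetricSpace X := TopologicalSpace.metrizableSpaceMetric X
  haveI : SecondCountableTopology X := inferInstance
  haveI : TotallySeparatedSpace X := inferInstance
  have hBc : (countableBasis X).Countable := countable_countableBasis X
  have hBb : IsTopologicalBasis (countableBasis X) := isBasis_countableBasis X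
  have hBne : (countableBasis X).Nonempty := by
    obtain ⟨x⟩ := (inferInstance : Nonempty X)
    obtain ⟨v, hv, -, -⟩ := hBb.exists_subset_of_mem_open (mem_univ x) isOpen_univ
    exact ⟨v, hv⟩
  obtain ⟨D, hD⟩ := hBc.exists_eq_range hBne
  set K : ℕ → ℕ → Set X := fun n m =>
    if h : ∃ V : Set X, IsClopen V ∧ D n ⊆ V ∧ D m ⊆ Vᶜ then h.choose else ∅ with hK
  have hKclopen : ∀ n m, IsClopen (K n m) := by
    intro n m
    rw [hK]; dsimp only
    split_ifs with h
    · exact h.choose_spec.1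
    · exact isClopen_empty
  have hKspec : ∀ n m, (∃ V : Set X, IsClopen V ∧ D n ⊆ V ∧ D m ⊆ Vᶜ) →
      D n ⊆ K n m ∧ D m ⊆ (K n m)ᶜ := by
    intro n m h
    rw [hK]; dsimp only
    rw [dif_pos h]
    exact ⟨h.choose_spec.2.1, h.choose_spec.2.2⟩
  set C : ℕ → Set X := fun p => K (Nat.unpair p).1 (Nat.unpair p).2 with hC
  have hCclopen : ∀ p, IsClopen (C p) := fun p => hKclopen _ _
  have hsep : ∀ x y : X, x ≠ y → ∃ p, x ∈ C p ∧ y ∉ C p := by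
    intro x y hxy
    obtain ⟨U, hU, hxU, hyU⟩ := exists_isClopen_of_totally_separated hxy
    obtain ⟨t, ht, hxt, htU⟩ := hBb.exists_subset_of_mem_open hxU hU.isOpen
    obtain ⟨t', ht', hyt', ht'U⟩ := hBb.exists_subset_of_mem_open hyU hU.compl.isOpen
    rw [hD] at ht ht'
    obtain ⟨n, rfl⟩ := ht
    obtain ⟨m, rfl⟩ := ht'
    have hex : ∃ V : Set X, IsClopen V ∧ D n ⊆ V ∧ D m ⊆ Vᶜ := ⟨U, hU, htU, ht'U⟩
    obtain ⟨h1, h2⟩ := hKspec n m hex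
    refine ⟨Nat.pair n m, ?_, ?_⟩
    · show x ∈ K (Nat.unpair (Nat.pair n m)).1 (Nat.unpair (Nat.pair n m)).2
      rw [Nat.unpair_pair]
      exact h1 hxt
    · show y ∉ K (Nat.unpair (Nat.pair n m)).1 (Nat.unpair (Nat.pair n m)).2
      rw [Nat.unpair_pair]
      exact fun hyK => h2 hyt' hyK
  set g : ℕ → X → ℝ := fun p => (C p).indicator (fun _ => ((3:ℝ)⁻¹) ^ p) with hg
  have hgnonneg : ∀ p x, 0 ≤ g p x := fun p x =>
    Set.indicator_nonneg (fun _ _ => by positivity) x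
  have hgle : ∀ p x, g p x ≤ (3⁻¹:ℝ) ^ p := by
    intro p x
    by_cases h : x ∈ C p
    · rw [hg]; dsimp only; rw [Set.indicator_of_mem h]
    · rw [hg]; dsimp only; rw [Set.indicator_of_notMem h]; positivity
  have hsummable : Summable (fun p : ℕ => ((3:ℝ)⁻¹) ^ p) :=
    summable_geometric_of_lt_one (by norm_num) (by norm_num)
  have hgx : ∀ x, Summable fun p => g p x := fun x =>
    Summable.of_nonneg_of_le (fun p => hgnonneg p x) (fun p => hgle p x) hsummable
  set φ : X → ℝ := fun x => ∑' p, g p x with hφ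
  have hφc : Continuous φ := by
    apply continuous_tsum (fun p => continuous_indicator (by simp [hCclopen p])
      continuous_const.continuousOn) hsummable
    intro p x
    rw [Real.norm_eq_abs, abs_of_nonneg (hgnonneg p x)]
    exact hgle p x
  have haux : ∀ x y : X, ∀ p₀ : ℕ, (∀ q < p₀, (x ∈ C q ↔ y ∈ C q)) →
      x ∈ C p₀ → y ∉ C p₀ → φ y < φ x := by
    intro x y p₀ hagree hx0 hy0
    set d : ℕ → ℝ := fun p => g p x - g p y with hd
    have hds : Summable d := (hgx x).sub (hgx y)
    have htsum : ∑' p, d p = φ x - φ y := Summable.tsum_sub (hgx x) (hgx y)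
    have hsplit := Summable.sum_add_tsum_nat_add (f := d) (p₀ + 1) hds
    have hhead : (∑ i ∈ Finset.range (p₀ + 1), d i) = (3⁻¹:ℝ) ^ p₀ := by
      rw [Finset.sum_eq_single_of_mem p₀ (Finset.self_mem_range_succ p₀)]
      · rw [hd]; dsimp only
        rw [hg]; dsimp only
        rw [Set.indicator_of_mem hx0, Set.indicator_of_notMem hy0, sub_zero]
      · intro q hq hqne
        have hqlt : q < p₀ := by
          have := Finset.mem_range.mp hq
          omega
        have hiff := hagree q hqlt
        rw [hd]; dsimp only
        rw [hg]; dsimp only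
        by_cases hmem : x ∈ C q
        · rw [Set.indicator_of_mem hmem, Set.indicator_of_mem (hiff.mp hmem), sub_self]
        · rw [Set.indicator_of_notMem hmem,
            Set.indicator_of_notMem (fun hy => hmem (hiff.mpr hy)), sub_self]
    have hdtail_summable : Summable fun i => d (i + (p₀ + 1)) :=
      (summable_nat_add_iff (p₀ + 1)).mpr hds
    have hgeom_tail_summable : Summable fun i : ℕ => -((3⁻¹:ℝ) ^ (i + (p₀ + 1))) :=
      (((summable_nat_add_iff (p₀ + 1)).mpr hsummable)).neg
    have htail_ge : -((3⁻¹:ℝ) ^ p₀ / 2) ≤ ∑' i, d (i + (p₀ + 1)) := by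
      have hpt : ∀ i : ℕ, -((3⁻¹:ℝ) ^ (i + (p₀ + 1))) ≤ d (i + (p₀ + 1)) := by
        intro i
        have h1 : g (i + (p₀ + 1)) y ≤ (3⁻¹:ℝ) ^ (i + (p₀ + 1)) := hgle _ y
        have h2 : 0 ≤ g (i + (p₀ + 1)) x := hgnonneg _ x
        rw [hd]; dsimp only
        linarith
      have hle := Summable.tsum_le_tsum hpt hgeom_tail_summable hdtail_summable
      have hcalc : ∑' i : ℕ, -((3⁻¹:ℝ) ^ (i + (p₀ + 1))) = -((3⁻¹:ℝ) ^ p₀ / 2) := by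
        rw [tsum_neg]
        congr 1
        have : ∀ i : ℕ, (3⁻¹:ℝ) ^ (i + (p₀ + 1)) = (3⁻¹:ℝ) ^ i * (3⁻¹:ℝ) ^ (p₀ + 1) :=
          fun i => pow_add _ i (p₀ + 1)
        rw [tsum_congr this, tsum_mul_right, tsum_geometric_of_lt_one (by norm_num) (by norm_num)]
        rw [pow_succ]
        ring
      rw [hcalc] at hle
      exact hle
    have hpos : (0:ℝ) < (3⁻¹:ℝ) ^ p₀ := by positivity
    have : φ x - φ y ≥ (3⁻¹:ℝ) ^ p₀ - (3⁻¹:ℝ) ^ p₀ / 2 := by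
      rw [← htsum, ← hsplit, hhead]
      linarith
    linarith
  refine ⟨φ, hφc, ?_⟩
  intro x y hxy
  by_contra hne
  have hex : ∃ p, ¬(x ∈ C p ↔ y ∈ C p) := by
    obtain ⟨p, hxp, hyp⟩ := hsep x y hne
    exact ⟨p, by tauto⟩
  set p₀ := Nat.find hex with hp₀
  have hmin : ∀ q < p₀, (x ∈ C q ↔ y ∈ C q) := fun q hq => of_not_not (Nat.find_min hex hq)
  have hspec := Nat.find_spec hex
  by_cases hx0 : x ∈ C p₀
  · have hy0 : y ∉ C p₀ := by tauto
    have := haux x y p₀ hmin hx0 hy0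
    rw [hxy] at this
    exact lt_irrefl _ this
  · have hy0 : y ∈ C p₀ := by tauto
    have := haux y x p₀ (fun q hq => (hmin q hq).symm) hy0 hx0
    rw [hxy] at this
    exact lt_irrefl _ this

end Stmt19Aux

namespace Stmt19Aux
open TopologicalSpace
variable {X : Type*} [TopologicalSpace X] (f : X ≃ₜ X) (φ : X → ℝ)

/-- The set of `φ`-minimum points of minimal sets. -/
def minPts : Set X := {y | ∃ M : Set X, IsMinimalSet f M ∧ y ∈ M ∧ ∀ w ∈ M, φ y ≤ φ w}

/-- The candidate basic set. -/
def BB : Set X := closure (minPts f φ)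

lemma star [CompactSpace X] [MetrizableSpace X] (hφc : Continuous φ) {z : X}
    (hz : z ∈ BB f φ) :
    ∃ L : Set X, IsClosed L ∧ InvSet f L ∧ z ∈ L ∧ ∀ p ∈ L, φ z ≤ φ p := by
  letI : MetricSpace X := metrizableSpaceMetric X
  obtain ⟨y, hyS, hylim⟩ := mem_closure_iff_seq_limit.mp hz
  choose M hMmin hyM hminM using hyS
  refine ⟨⋂ n : ℕ, closure (⋃ i, ⋃ (_ : n ≤ i), M i),
    isClosed_iInter fun n => isClosed_closure, ?_, ?_, ?_⟩
  · apply invSet_of_image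
    have hfM : ∀ i, (⇑f) '' M i = M i := fun i => (hMmin i).2.2.1
    have himg : ∀ n : ℕ, (⇑f) '' (⋃ i, ⋃ (_ : n ≤ i), M i) = ⋃ i, ⋃ (_ : n ≤ i), M i := by
      intro n
      rw [image_iUnion₂]
      exact iUnion₂_congr fun i _ => hfM i
    calc (⇑f) '' ⋂ n : ℕ, closure (⋃ i, ⋃ (_ : n ≤ i), M i)
        = ⋂ n : ℕ, (⇑f) '' closure (⋃ i, ⋃ (_ : n ≤ i), M i) :=
          Set.image_iInter f.bijective _
      _ = ⋂ n : ℕ, closure (⋃ i, ⋃ (_ : n ≤ i), M i) := by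
          refine iInter_congr fun n => ?_
          rw [show (⇑f) '' closure (⋃ i, ⋃ (_ : n ≤ i), M i)
              = closure ((⇑f) '' (⋃ i, ⋃ (_ : n ≤ i), M i)) from f.image_closure _, himg n]
  · refine mem_iInter.mpr fun n => ?_
    apply mem_closure_of_tendsto hylim
    refine Filter.eventually_atTop.mpr ⟨n, fun i hi => ?_⟩
    exact mem_iUnion₂.mpr ⟨i, hi, hyM i⟩
  · intro p hp
    by_contra hlt
    push_neg at hlt
    have hφy : Filter.Tendsto (fun i => φ (y i)) Filter.atTop (nhds (φ z)) :=
      (hφc.tendsto z).comp hylim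
    set c := φ z - (φ z - φ p) / 2 with hc
    have hev : ∀ᶠ i in Filter.atTop, φ (y i) ∈ Ioi c :=
      hφy (Ioi_mem_nhds (by rw [hc]; linarith))
    obtain ⟨n, hn⟩ := Filter.eventually_atTop.mp hev
    have hpL : p ∈ closure (⋃ i, ⋃ (_ : n ≤ i), M i) := mem_iInter.mp hp n
    rw [mem_closure_iff] at hpL
    have hO : IsOpen (φ ⁻¹' Iio c) := IsOpen.preimage hφc isOpen_Iio
    have hpO : p ∈ φ ⁻¹' Iio c := by
      show φ p < c
      rw [hc]; linarith
    obtain ⟨q, hqO, hqU⟩ := hpL _ hO hpO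
    obtain ⟨i, hi, hqM⟩ := mem_iUnion₂.mp hqU
    have h1 : φ (y i) ≤ φ q := hminM i q hqM
    have h2 : c < φ (y i) := hn i hi
    have h3 : φ q < c := hqO
    linarith

lemma exists_min_on [CompactSpace X] (hφc : Continuous φ) {M : Set X}
    (hM : IsMinimalSet f M) : ∃ p, p ∈ M ∧ ∀ w ∈ M, φ p ≤ φ w := by
  obtain ⟨p, hpM, hmin⟩ := hM.2.1.isCompact.exists_isMinOn hM.1 hφc.continuousOn
  exact ⟨p, hpM, fun w hw => hmin hw⟩

lemma inter_BB_eq_singleton [CompactSpace X] [MetrizableSpace X] (hφc : Continuous φ)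
    (hφi : Function.Injective φ) {M : Set X} {p : X} (hM : IsMinimalSet f M) (hpM : p ∈ M)
    (hpmin : ∀ w ∈ M, φ p ≤ φ w) : M ∩ BB f φ = {p} := by
  apply Subset.antisymm
  · rintro z ⟨hzM, hzB⟩
    obtain ⟨L, hLc, hLinv, hzL, hLmin⟩ := star f φ hφc hzB
    have hML : M ⊆ L := by
      rw [minimalSet_eq_closure_orbit f hM hzM]
      exact closure_minimal (orbitZ_subset_of_invSet f hLinv hzL) hLc
    exact hφi (le_antisymm (hLmin p (hML hpM)) (hpmin z hzM))
  · rintro z rfl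
    exact ⟨hpM, subset_closure ⟨M, hM, hpM, hpmin⟩⟩

lemma orbit_inter_BB_subsingleton [CompactSpace X] [MetrizableSpace X] (hφc : Continuous φ)
    (hφi : Function.Injective φ) (x : X) : (orbitZ f x ∩ BB f φ).Subsingleton := by
  rintro z₁ ⟨hz₁o, hz₁B⟩ z₂ ⟨hz₂o, hz₂B⟩
  have h21 : z₂ ∈ orbitZ f z₁ := by rw [orbitZ_eq_of_mem f hz₁o]; exact hz₂o
  have h12 : z₁ ∈ orbitZ f z₂ := mem_orbitZ_comm f h21
  obtain ⟨L₁, _, hL₁inv, hz₁L, hL₁min⟩ := star f φ hφc hz₁B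
  obtain ⟨L₂, _, hL₂inv, hz₂L, hL₂min⟩ := star f φ hφc hz₂B
  exact hφi (le_antisymm (hL₁min z₂ (orbitZ_subset_of_invSet f hL₁inv hz₁L h21))
    (hL₂min z₁ (orbitZ_subset_of_invSet f hL₂inv hz₂L h12)))

lemma BB_quasi [CompactSpace X] (hφc : Continuous φ) : IsQuasiSection f (BB f φ) := by
  refine ⟨isClosed_closure, fun U hU hBU => ?_⟩
  rw [eq_univ_iff_forall]
  intro x
  obtain ⟨M, hM, hMsub⟩ := exists_minimal_subset f isClosed_closure
    ⟨x, subset_closure (mem_orbitZ_self f x)⟩ (invSet_closure f (invSet_orbitZ f x))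
  obtain ⟨p, hpM, hpmin⟩ := exists_min_on f φ hφc hM
  have hpB : p ∈ BB f φ := subset_closure ⟨M, hM, hpM, hpmin⟩
  have hpcl : p ∈ closure (orbitZ f x) := hMsub hpM
  rw [mem_closure_iff] at hpcl
  obtain ⟨q, hqU, n, hn⟩ := hpcl U hU (hBU hpB)
  simp only [orbitSetZ, mem_iUnion]
  refine ⟨-n, q, hqU, ?_⟩
  rw [← hn, zpow_neg_apply]

lemma BB_minimal [CompactSpace X] [MetrizableSpace X] (hφc : Continuous φ)
    (hφi : Function.Injective φ) {B2 : Set X} (hB2 : IsQuasiSection f B2)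
    (hsub : B2 ⊆ BB f φ) : B2 = BB f φ := by
  apply Subset.antisymm hsub
  have hS : minPts f φ ⊆ B2 := by
    rintro p ⟨M, hM, hpM, hpmin⟩
    obtain ⟨z, hzM, hzB2⟩ := quasi_meets_minimal f hB2 hM
    have hz : z ∈ M ∩ BB f φ := ⟨hzM, hsub hzB2⟩
    rw [inter_BB_eq_singleton f φ hφc hφi hM hpM hpmin] at hz
    rw [← hz]
    exact hzB2
  exact closure_minimal hS hB2.1

lemma BB_interior_empty [CompactSpace X] [MetrizableSpace X] (hφc : Continuous φ)
    (hφi : Function.Injective φ) (hf : DenselyAperiodic f) : interior (BB f φ) = ∅ := by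
  letI : MetricSpace X := metrizableSpaceMetric X
  by_contra hne
  rw [← Ne, ← nonempty_iff_ne_empty] at hne
  set V := interior (BB f φ) with hVdef
  have hVo : IsOpen V := isOpen_interior
  have hVB : V ⊆ BB f φ := interior_subset
  have hyex : (V ∩ minPts f φ).Nonempty := by
    obtain ⟨z, hz⟩ := hne
    have hzc : z ∈ closure (minPts f φ) := hVB hz
    rw [mem_closure_iff] at hzc
    exact hzc V hVo hz
  obtain ⟨y, hyV, M, hM, hyM, hymin⟩ := hyex
  have hkey : ∃ n : ℤ, n ≠ 0 ∧ (f.toEquiv ^ n) y ∈ V := by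
    by_cases hper : ∃ n : ℤ, n ≠ 0 ∧ (f.toEquiv ^ n) y = y
    · obtain ⟨n, hn0, hny⟩ := hper
      exact ⟨n, hn0, by rw [hny]; exact hyV⟩
    · push_neg at hper
      have hMinf : M.Infinite := by
        apply Set.Infinite.mono (orbitZ_subset_of_invSet f (minimalSet_invSet f hM) hyM)
        apply Set.infinite_of_injective_forall_mem (f := fun n : ℤ => (f.toEquiv ^ n) y)
        · intro a b hab
          simp only at hab
          by_contra hane
          have h0 : (f.toEquiv ^ (a - b)) y = y := by
            have h1 : (f.toEquiv ^ (a - b)) y = (f.toEquiv ^ (-b)) ((f.toEquiv ^ a) y) := by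
              rw [show a - b = -b + a by ring, fz_add]
            rw [h1, hab, zpow_neg_apply]
          exact hper (a - b) (by omega) h0
        · exact fun n => zpow_mem_orbitZ f n y
      have hperf := minimal_infinite_perfect f hM hMinf hyM
      rw [mem_closure_iff] at hperf
      obtain ⟨y', hy'V, hy'M, hy'ne⟩ := hperf V hVo hyV
      have hy'cl : y' ∈ closure (orbitZ f y) := hM.2.2.2 y hyM hy'M
      have hWo : IsOpen (V ∩ ({y} : Set X)ᶜ) := hVo.inter isClosed_singleton.isOpen_compl
      have hy'W : y' ∈ V ∩ ({y} : Set X)ᶜ := ⟨hy'V, hy'ne⟩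
      rw [mem_closure_iff] at hy'cl
      obtain ⟨w, ⟨hwV, hwne⟩, n, hn⟩ := hy'cl _ hWo hy'W
      refine ⟨n, ?_, by rw [hn]; exact hwV⟩
      rintro rfl
      rw [fz_zero] at hn
      exact hwne (by rw [← hn]; rfl)
  obtain ⟨n, hn0, hnV⟩ := hkey
  set U := V ∩ ((fun x => (f.toEquiv ^ n) x) ⁻¹' V) with hUdef
  have hUo : IsOpen U := hVo.inter (IsOpen.preimage (contZ f n) hVo)
  have hyU : y ∈ U := ⟨hyV, hnV⟩
  obtain ⟨w, hwap, hwU⟩ := hf.exists_mem_open hUo ⟨y, hyU⟩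
  have hfix : (f.toEquiv ^ n) w = w := by
    apply orbit_inter_BB_subsingleton f φ hφc hφi w
    · exact ⟨zpow_mem_orbitZ f n w, hVB hwU.2⟩
    · exact ⟨mem_orbitZ_self f w, hVB hwU.1⟩
  exact hwap (orbit_finite_of_periodic f hn0 hfix)

end Stmt19Aux

theorem stmt19 {X : Type*} [TopologicalSpace X] [CompactSpace X] [TopologicalSpace.MetrizableSpace X] [TotallyDisconnectedSpace X] [Nonempty X] (f : X ≃ₜ X)
    (hf : DenselyAperiodic f) :
    ∃ B : Set X, IsMinimalBasicSet f B ∧ interior B = ∅ ∧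
      ∀ M : Set X, IsMinimalSet f M → ∃ p : X, M ∩ B = {p} := by
  obtain ⟨φ, hφc, hφi⟩ := Stmt19Aux.exists_embedding_real X
  refine ⟨Stmt19Aux.BB f φ, ⟨⟨Stmt19Aux.BB_quasi f φ hφc,
    Stmt19Aux.orbit_inter_BB_subsingleton f φ hφc hφi⟩, ?_⟩,
    Stmt19Aux.BB_interior_empty f φ hφc hφi hf, ?_⟩
  · intro B2 hB2 hsub
    exact Stmt19Aux.BB_minimal f φ hφc hφi hB2.1 hsub
  · intro M hM
    obtain ⟨p, hpM, hpmin⟩ := Stmt19Aux.exists_min_on f φ hφc hM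
    exact ⟨p, Stmt19Aux.inter_BB_eq_singleton f φ hφc hφi hM hpM hpmin⟩
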